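/- arXiv:2004.11290 — 2 statements merged into one kernel-verified Lean document; each statement's English description precedes it below -/
import Mathlib

section
/- The functional H attains its minimum over A_H, the minimizer η̄ ∈ A_H is unique, and the minimum value satisfies min { H(η) : η ∈ A_H } < 0. -/
open MeasureTheory Set Filter

/-- Hypotheses on the function `f₁` from Section 6.1 of the paper. -/
structure F1Hyp (ℓ ℓ₁ : ℝ) (f₁ : ℝ → ℝ) : Prop where
  hl : 0 < ℓ
  hl1 : 0 < ℓ₁
  cont : ContinuousOn f₁ (Icc 0 1)
  diff : ∃ d : ℝ → ℝ, ContinuousOn d (Ioc 0 1) ∧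
    ∀ t ∈ Ioc (0:ℝ) 1, HasDerivWithinAt f₁ (d t) (Ioc 0 1) t
  anti : StrictAntiOn f₁ (Icc 0 1)
  nonneg : ∀ t ∈ Icc (0:ℝ) 1, 0 ≤ f₁ t
  f10 : f₁ 0 = ℓ
  f11 : f₁ 1 = 0
  convexSqrt : ConvexOn ℝ (Icc 0 1) (fun u => f₁ (Real.sqrt u))
  lim0 : Tendsto (fun s => (f₁ s - ℓ + ℓ₁ * s) / s) (nhdsWithin 0 (Ioi 0)) (nhds 0)

/-- `γ` is admissible, with a.e. derivative `γ'` (absolute continuity is encoded by the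
fundamental theorem of calculus representation with an `L¹` derivative). -/
def Admissible (γ γ' : ℝ → ℝ) : Prop :=
  IntegrableOn γ' (Icc 0 1) ∧
  (∀ t ∈ Icc (0:ℝ) 1, γ t = ∫ u in (0:ℝ)..t, γ' u) ∧
  (∀ t ∈ Icc (0:ℝ) 1, 0 ≤ γ t ∧ γ t ≤ 1) ∧
  γ 0 = 0 ∧ γ 1 = 0

/-- The energy in the characterization (6.11). -/
noncomputable def energy (f₁ : ℝ → ℝ) (s : ℝ) (γ γ' : ℝ → ℝ) : ℝ :=
  ∫ t in (0:ℝ)..1, Real.sqrt (s ^ 2 * (f₁ (Real.sqrt (γ t))) ^ 2 + (γ' t) ^ 2 / 4)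

/-- The cohesive energy density of pristine material, via characterization (6.11). -/
noncomputable def g0 (f₁ : ℝ → ℝ) (s : ℝ) : ℝ :=
  sInf {x | ∃ γ γ' : ℝ → ℝ, Admissible γ γ' ∧ x = energy f₁ s γ γ'}


/-- `η` belongs to the class `A_H`, with derivative `η' ∈ L²(0,1)`. -/
def AdmissibleH (η η' : ℝ → ℝ) : Prop :=
  IntegrableOn η' (Icc 0 1) ∧
  IntegrableOn (fun t => (η' t) ^ 2) (Icc 0 1) ∧
  (∀ t ∈ Icc (0:ℝ) 1, η t = ∫ u in (0:ℝ)..t, η' u) ∧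
  (∀ t ∈ Icc (0:ℝ) 1, 0 ≤ η t) ∧
  η 0 = 0 ∧ η 1 = 0

/-- The limit functional `H` of (8.12). -/
noncomputable def Hfun (ℓ ℓ₁ : ℝ) (η η' : ℝ → ℝ) : ℝ :=
  ∫ t in (0:ℝ)..1, (-(ℓ₁ / ℓ) * Real.sqrt (η t) + (η' t) ^ 2 / (8 * ℓ ^ 2))

/-- The infimum of `H` over the class `A_H`. -/
noncomputable def minH (ℓ ℓ₁ : ℝ) : ℝ :=
  sInf {x | ∃ η η' : ℝ → ℝ, AdmissibleH η η' ∧ x = Hfun ℓ ℓ₁ η η'}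

section St11Aux
open Real


noncomputable def st11p : ℝ := ((3:ℝ)/8) ^ ((1:ℝ)/3)
noncomputable def st11k (ℓ ℓ₁ : ℝ) : ℝ := (2*ℓ*ℓ₁) ^ ((1:ℝ)/3)
noncomputable def st11β (t : ℝ) : ℝ := (2 * Real.arccos (2*t - 1) + 2*Real.pi) / 3
noncomputable def st11eta (ℓ ℓ₁ t : ℝ) : ℝ :=
  (st11k ℓ ℓ₁)^2 * st11p^4 * (1 + 2*Real.cos (st11β t))^2
noncomputable def st11eta' (ℓ ℓ₁ t : ℝ) : ℝ :=
  -(4 * (st11k ℓ ℓ₁)^2 * st11p * Real.cos (st11β t / 2))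
noncomputable def st11eta'' (ℓ ℓ₁ t : ℝ) : ℝ :=
  (st11k ℓ ℓ₁)^2 / (st11p^2 * (1 + 2*Real.cos (st11β t)))

lemma st11p_pos : 0 < st11p := Real.rpow_pos_of_pos (by norm_num) _

lemma st11p_cube : st11p^3 = 3/8 := by
  rw [st11p, ← Real.rpow_natCast (((3:ℝ)/8) ^ ((1:ℝ)/3)) 3, ← Real.rpow_mul (by norm_num)]
  norm_num

lemma st11k_pos {ℓ ℓ₁ : ℝ} (hl : 0 < ℓ) (hl1 : 0 < ℓ₁) : 0 < st11k ℓ ℓ₁ :=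
  Real.rpow_pos_of_pos (by positivity) _

lemma st11k_cube {ℓ ℓ₁ : ℝ} (hl : 0 < ℓ) (hl1 : 0 < ℓ₁) : (st11k ℓ ℓ₁)^3 = 2*ℓ*ℓ₁ := by
  rw [st11k, ← Real.rpow_natCast ((2*ℓ*ℓ₁) ^ ((1:ℝ)/3)) 3, ← Real.rpow_mul (by positivity)]
  norm_num

lemma st11β_mem {t : ℝ} (ht : t ∈ Icc (0:ℝ) 1) :
    st11β t ∈ Icc (2*π/3) (4*π/3) := by
  have h1 : Real.arccos (2*t-1) ≤ π := Real.arccos_le_pi _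
  have h2 : 0 ≤ Real.arccos (2*t-1) := Real.arccos_nonneg _
  constructor <;> · simp only [st11β]; linarith

lemma st11β_mem_open {t : ℝ} (ht : t ∈ Ioo (0:ℝ) 1) :
    st11β t ∈ Ioo (2*π/3) (4*π/3) := by
  have h1 : Real.arccos (2*t-1) < π := by
    rcases lt_or_eq_of_le (Real.arccos_le_pi (2*t-1)) with h | h
    · exact h
    · exfalso
      have := Real.arccos_eq_pi.1 h
      nlinarith [ht.1]
  have h2 : 0 < Real.arccos (2*t-1) := Real.arccos_pos.2 (by nlinarith [ht.2])
  constructor <;> · simp only [st11β]; linarith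

lemma cos_lt_half_of {x : ℝ} (hx : |x - π| < π/3) : Real.cos x < -(1/2) := by
  have hpi := Real.pi_pos
  have h1 : Real.cos x = -Real.cos (π - x) := by rw [Real.cos_pi_sub]; ring
  rw [h1]
  have h2 : Real.cos (π - x) = Real.cos |π - x| := (Real.cos_abs _).symm
  have h3 : |π - x| < π/3 := by rwa [abs_sub_comm]
  have h4 : Real.cos (π/3) < Real.cos |π - x| := by
    rcases eq_or_lt_of_le (abs_nonneg (π - x)) with h | h
    · rw [← h, Real.cos_zero, Real.cos_pi_div_three]; norm_num
    · exact Real.cos_lt_cos_of_nonneg_of_le_pi (abs_nonneg _) (by linarith) h3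
  rw [Real.cos_pi_div_three] at h4
  rw [h2]
  linarith

lemma cos_le_half_of {x : ℝ} (hx : |x - π| ≤ π/3) : Real.cos x ≤ -(1/2) := by
  have hpi := Real.pi_pos
  have h1 : Real.cos x = -Real.cos (π - x) := by rw [Real.cos_pi_sub]; ring
  rw [h1]
  have h2 : Real.cos (π - x) = Real.cos |π - x| := (Real.cos_abs _).symm
  have h3 : |π - x| ≤ π/3 := by rwa [abs_sub_comm]
  have h4 : Real.cos (π/3) ≤ Real.cos |π - x| :=
    Real.cos_le_cos_of_nonneg_of_le_pi (abs_nonneg _) (by linarith) h3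
  rw [Real.cos_pi_div_three] at h4
  rw [h2]
  linarith

lemma st11_cos_lt {t : ℝ} (ht : t ∈ Ioo (0:ℝ) 1) :
    1 + 2 * Real.cos (st11β t) < 0 := by
  have h := st11β_mem_open ht
  have : Real.cos (st11β t) < -(1/2) := by
    apply cos_lt_half_of
    rw [abs_sub_lt_iff]
    constructor <;> [linarith [h.2]; linarith [h.1]]
  linarith

lemma st11_cos_le {t : ℝ} (ht : t ∈ Icc (0:ℝ) 1) :
    1 + 2 * Real.cos (st11β t) ≤ 0 := by
  have h := st11β_mem ht
  have : Real.cos (st11β t) ≤ -(1/2) := by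
    apply cos_le_half_of
    rw [abs_sub_le_iff]
    constructor <;> [linarith [h.2]; linarith [h.1]]
  linarith

lemma st11β_zero : st11β 0 = π + π/3 := by
  simp only [st11β]
  norm_num [Real.arccos_neg_one]
  ring

lemma st11β_one : st11β 1 = π - π/3 := by
  simp only [st11β]
  norm_num [Real.arccos_one]
  ring

lemma st11_cosβ0 : Real.cos (st11β 0) = -(1/2) := by
  rw [st11β_zero, Real.cos_add]
  simp [Real.cos_pi_div_three]

lemma st11_cosβ1 : Real.cos (st11β 1) = -(1/2) := by
  rw [st11β_one, Real.cos_pi_sub, Real.cos_pi_div_three]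

lemma st11eta_zero (ℓ ℓ₁ : ℝ) : st11eta ℓ ℓ₁ 0 = 0 := by
  simp [st11eta, st11_cosβ0]

lemma st11eta_one (ℓ ℓ₁ : ℝ) : st11eta ℓ ℓ₁ 1 = 0 := by
  simp [st11eta, st11_cosβ1]

lemma st11eta_nonneg (ℓ ℓ₁ t : ℝ) : 0 ≤ st11eta ℓ ℓ₁ t := by
  unfold st11eta; positivity

lemma st11β_cont : Continuous st11β := by
  unfold st11β
  exact ((continuous_const.mul (Real.continuous_arccos.comp (by continuity))).add
    continuous_const).div_const 3

lemma st11eta_cont (ℓ ℓ₁ : ℝ) : Continuous (st11eta ℓ ℓ₁) := by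
  unfold st11eta
  exact (continuous_const.mul (((continuous_const.add (continuous_const.mul
    (Real.continuous_cos.comp st11β_cont)))).pow 2))

lemma st11eta'_cont (ℓ ℓ₁ : ℝ) : Continuous (st11eta' ℓ ℓ₁) := by
  unfold st11eta'
  exact (continuous_const.mul (Real.continuous_cos.comp (st11β_cont.div_const 2))).neg

lemma st11eta'_bound (ℓ ℓ₁ t : ℝ) : |st11eta' ℓ ℓ₁ t| ≤ 4 * (st11k ℓ ℓ₁)^2 * st11p := by
  have hp := st11p_pos
  have hk : (0:ℝ) ≤ (st11k ℓ ℓ₁)^2 := sq_nonneg _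
  simp only [st11eta', abs_neg]
  have h1 : |Real.cos (st11β t / 2)| ≤ 1 := Real.abs_cos_le_one _
  rw [abs_mul, abs_of_nonneg (by positivity : (0:ℝ) ≤ 4 * st11k ℓ ℓ₁ ^ 2 * st11p)]
  nlinarith [abs_nonneg (Real.cos (st11β t / 2)),
    mul_le_mul_of_nonneg_left h1 (by positivity : (0:ℝ) ≤ 4 * st11k ℓ ℓ₁ ^ 2 * st11p)]

lemma st11_sin_pos {t : ℝ} (ht : t ∈ Ioo (0:ℝ) 1) : 0 < Real.sin (st11β t / 2) := by
  have h := st11β_mem_open ht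
  have hpi := Real.pi_pos
  exact Real.sin_pos_of_pos_of_lt_pi (by linarith [h.1]) (by linarith [h.2])

lemma st11_cosβ_sin (t : ℝ) :
    Real.cos (st11β t) = 1 - 2 * Real.sin (st11β t / 2) ^ 2 := by
  have h2 := Real.cos_two_mul (st11β t / 2)
  rw [show 2*(st11β t/2) = st11β t by ring] at h2
  have h3 := Real.sin_sq_add_cos_sq (st11β t / 2)
  linarith

lemma st11_fortysq {t : ℝ} (ht : t ∈ Ioo (0:ℝ) 1) :
    0 < 4 * Real.sin (st11β t / 2) ^ 2 - 3 := by
  have h := st11_cos_lt ht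
  rw [st11_cosβ_sin t] at h
  linarith

lemma st11_sqrt_eq {t : ℝ} (ht : t ∈ Ioo (0:ℝ) 1) :
    Real.sqrt (1 - (2*t-1)^2) =
      Real.sin (st11β t / 2) * (4 * Real.sin (st11β t / 2) ^ 2 - 3) := by
  have hA : 3 * (st11β t / 2) - π = Real.arccos (2*t-1) := by
    simp only [st11β]; ring
  have h1 : Real.sqrt (1 - (2*t-1)^2) = Real.sin (Real.arccos (2*t-1)) :=
    (Real.sin_arccos _).symm
  rw [h1, ← hA, Real.sin_sub, Real.sin_pi, Real.cos_pi, Real.sin_three_mul]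
  ring

lemma st11_sqrt_pos {t : ℝ} (ht : t ∈ Ioo (0:ℝ) 1) :
    0 < Real.sqrt (1 - (2*t-1)^2) := by
  apply Real.sqrt_pos.2
  nlinarith [ht.1, ht.2]

lemma st11β_deriv {t : ℝ} (ht : t ∈ Ioo (0:ℝ) 1) :
    HasDerivAt st11β (-4 / (3 * Real.sqrt (1 - (2*t-1)^2))) t := by
  have hx1 : (2*t-1) ≠ -1 := by intro h; nlinarith [ht.1]
  have hx2 : (2*t-1) ≠ 1 := by intro h; nlinarith [ht.2]
  have h0 : HasDerivAt (fun u : ℝ => 2*u-1) 2 t := by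
    simpa using ((hasDerivAt_id t).const_mul 2).sub_const 1
  have h1 := (Real.hasDerivAt_arccos hx1 hx2).comp t h0
  have h2 := ((h1.const_mul 2).add_const (2*π)).div_const 3
  have hs := st11_sqrt_pos ht
  refine h2.congr_deriv (Eq.symm ?_)
  field_simp
  ring

lemma st11eta'_deriv {ℓ ℓ₁ : ℝ} (hl : 0 < ℓ) (hl1 : 0 < ℓ₁) {t : ℝ} (ht : t ∈ Ioo (0:ℝ) 1) :
    HasDerivAt (st11eta' ℓ ℓ₁) (st11eta'' ℓ ℓ₁ t) t := by
  have hβ := st11β_deriv ht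
  have hc : HasDerivAt (fun u => Real.cos (st11β u / 2))
      (-Real.sin (st11β t / 2) * (-4 / (3 * Real.sqrt (1 - (2*t-1)^2)) / 2)) t :=
    (Real.hasDerivAt_cos _).comp t (hβ.div_const 2)
  have h := (hc.const_mul (4 * (st11k ℓ ℓ₁)^2 * st11p)).neg
  refine h.congr_deriv (Eq.symm ?_)
  simp only [st11eta'']
  rw [st11_sqrt_eq ht, st11_cosβ_sin t]
  set s := Real.sin (st11β t / 2) with hs
  have hs0 : s ≠ 0 := (st11_sin_pos ht).ne'
  have h43 : (4*s^2 - 3) ≠ 0 := (st11_fortysq ht).ne'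
  have hp0 : st11p ≠ 0 := st11p_pos.ne'
  have hp3 : st11p ^ 3 = 3/8 := st11p_cube
  have hne : st11p^2 * (1 + 2*(1 - 2*s^2)) ≠ 0 := by
    apply mul_ne_zero (pow_ne_zero _ hp0)
    intro hcon; apply h43; linarith
  have h3ne : (3*(4*s^2-3)) ≠ 0 := by
    intro hcon; apply h43; linarith
  have hR : -(4 * (st11k ℓ ℓ₁)^2 * st11p * (-s * (-4 / (3 * (s*(4*s^2-3))) / 2)))
      = -(8*(st11k ℓ ℓ₁)^2*st11p/(3*(4*s^2-3))) := by
    field_simp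
    ring
  rw [hR, ← neg_div, div_eq_div_iff hne h3ne]
  linear_combination (-8*(st11k ℓ ℓ₁)^2*(4*s^2-3))*hp3

lemma st11eta_deriv {ℓ ℓ₁ : ℝ} (hl : 0 < ℓ) (hl1 : 0 < ℓ₁) {t : ℝ} (ht : t ∈ Ioo (0:ℝ) 1) :
    HasDerivAt (st11eta ℓ ℓ₁) (st11eta' ℓ ℓ₁ t) t := by
  have hβ := st11β_deriv ht
  have hcos : HasDerivAt (fun u => Real.cos (st11β u))
      (-Real.sin (st11β t) * (-4 / (3 * Real.sqrt (1 - (2*t-1)^2)))) t :=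
    (Real.hasDerivAt_cos _).comp t hβ
  have hf : HasDerivAt (fun u => 1 + 2 * Real.cos (st11β u))
      (2 * (-Real.sin (st11β t) * (-4 / (3 * Real.sqrt (1 - (2*t-1)^2))))) t :=
    (hcos.const_mul 2).const_add 1
  have h2 := hf.pow 2
  have h := h2.const_mul ((st11k ℓ ℓ₁)^2 * st11p^4)
  refine h.congr_deriv (Eq.symm ?_)
  have hsinβ : Real.sin (st11β t) = 2 * Real.sin (st11β t / 2) * Real.cos (st11β t / 2) := by
    have := Real.sin_two_mul (st11β t / 2)
    rw [show 2*(st11β t/2) = st11β t by ring] at this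
    linarith
  rw [st11_sqrt_eq ht, st11_cosβ_sin t, hsinβ]
  set s := Real.sin (st11β t / 2) with hsdef
  set c := Real.cos (st11β t / 2) with hcdef
  have hs0 : s ≠ 0 := (st11_sin_pos ht).ne'
  have h43 : (4*s^2 - 3) ≠ 0 := (st11_fortysq ht).ne'
  have hp0 : st11p ≠ 0 := st11p_pos.ne'
  have hp3 : st11p ^ 3 = 3/8 := st11p_cube
  have hR : (st11k ℓ ℓ₁)^2 * st11p^4 *
      ((2:ℕ) * (1 + 2*(1 - 2*s^2))^(2-1) * (2 * (-(2*s*c) * (-4 / (3 * (s*(4*s^2-3)))))))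
      = -(32*(st11k ℓ ℓ₁)^2*st11p^4*c/3) := by
    field_simp
    rw [div_eq_iff (by intro h; apply h43; linarith)]
    push_cast
    ring
  rw [show st11eta' ℓ ℓ₁ t = -(4 * (st11k ℓ ℓ₁)^2 * st11p * c) from rfl, hR]
  linear_combination (32*(st11k ℓ ℓ₁)^2*c*st11p/3)*hp3

noncomputable def st11q (ℓ ℓ₁ t : ℝ) : ℝ := -(1/(4*ℓ^2)) * st11eta'' ℓ ℓ₁ t

lemma st11eta''_neg {ℓ ℓ₁ : ℝ} (hl : 0 < ℓ) (hl1 : 0 < ℓ₁) {t : ℝ} (ht : t ∈ Ioo (0:ℝ) 1) :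
    st11eta'' ℓ ℓ₁ t < 0 := by
  have h := st11_cos_lt ht
  have hk := st11k_pos hl hl1
  have hp := st11p_pos
  apply div_neg_of_pos_of_neg (by positivity)
  have : st11p^2 > 0 := by positivity
  nlinarith

lemma st11q_nonneg {ℓ ℓ₁ : ℝ} (hl : 0 < ℓ) (hl1 : 0 < ℓ₁) {t : ℝ} (ht : t ∈ Ioo (0:ℝ) 1) :
    0 ≤ st11q ℓ ℓ₁ t := by
  have h := st11eta''_neg hl hl1 ht
  have : (0:ℝ) < 1/(4*ℓ^2) := by positivity
  unfold st11q; nlinarith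

lemma st11q_integrableOn {ℓ ℓ₁ : ℝ} (hl : 0 < ℓ) (hl1 : 0 < ℓ₁) :
    IntegrableOn (st11q ℓ ℓ₁) (Ioc (0:ℝ) 1) := by
  apply intervalIntegral.integrableOn_deriv_of_nonneg
    (g := fun t => -(1/(4*ℓ^2)) * st11eta' ℓ ℓ₁ t)
  · exact (continuous_const.mul (st11eta'_cont ℓ ℓ₁)).continuousOn
  · intro x hx
    exact (st11eta'_deriv hl hl1 hx).const_mul _
  · intro x hx
    exact st11q_nonneg hl hl1 hx

lemma st11_ftc_eta {ℓ ℓ₁ : ℝ} (hl : 0 < ℓ) (hl1 : 0 < ℓ₁) {t : ℝ} (ht : t ∈ Icc (0:ℝ) 1) :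
    st11eta ℓ ℓ₁ t = ∫ u in (0:ℝ)..t, st11eta' ℓ ℓ₁ u := by
  have h := intervalIntegral.integral_eq_sub_of_hasDeriv_right_of_le ht.1
    ((st11eta_cont ℓ ℓ₁).continuousOn)
    (fun x hx => (st11eta_deriv hl hl1 ⟨hx.1, lt_of_lt_of_le hx.2 ht.2⟩).hasDerivWithinAt)
    ((st11eta'_cont ℓ ℓ₁).intervalIntegrable 0 t)
  rw [h, st11eta_zero, sub_zero]

lemma st11_ftc_q {ℓ ℓ₁ : ℝ} (hl : 0 < ℓ) (hl1 : 0 < ℓ₁) {s : ℝ} (hs : s ∈ Icc (0:ℝ) 1) :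
    ∫ t in s..1, st11q ℓ ℓ₁ t
      = (1/(4*ℓ^2)) * st11eta' ℓ ℓ₁ s - (1/(4*ℓ^2)) * st11eta' ℓ ℓ₁ 1 := by
  have h := intervalIntegral.integral_eq_sub_of_hasDeriv_right_of_le hs.2
    (Continuous.continuousOn ((continuous_const.mul (st11eta'_cont ℓ ℓ₁))
      : Continuous fun t => -(1/(4*ℓ^2)) * st11eta' ℓ ℓ₁ t))
    (fun x hx => ((st11eta'_deriv hl hl1 ⟨lt_of_le_of_lt hs.1 hx.1, hx.2⟩).const_mul
        (-(1/(4*ℓ^2)))).hasDerivWithinAt)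
    (by
      rw [intervalIntegrable_iff_integrableOn_Ioc_of_le hs.2]
      exact (st11q_integrableOn hl hl1).mono_set (Ioc_subset_Ioc hs.1 le_rfl))
  simp only [st11q]
  rw [h]; simp only [Pi.mul_apply]; ring

lemma st11eta_pos {ℓ ℓ₁ : ℝ} (hl : 0 < ℓ) (hl1 : 0 < ℓ₁) {t : ℝ} (ht : t ∈ Ioo (0:ℝ) 1) :
    0 < st11eta ℓ ℓ₁ t := by
  have h := st11_cos_lt ht
  have hk := st11k_pos hl hl1
  have hp := st11p_pos
  have h2 : (0:ℝ) < (1 + 2*Real.cos (st11β t))^2 :=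
    lt_of_le_of_ne (sq_nonneg _) (Ne.symm (pow_ne_zero 2 h.ne))
  unfold st11eta
  exact mul_pos (by positivity) h2

lemma st11_sqrt_eta {ℓ ℓ₁ : ℝ} (hl : 0 < ℓ) (hl1 : 0 < ℓ₁) {t : ℝ} (ht : t ∈ Icc (0:ℝ) 1) :
    Real.sqrt (st11eta ℓ ℓ₁ t) = -(st11k ℓ ℓ₁ * st11p^2 * (1 + 2*Real.cos (st11β t))) := by
  have h := st11_cos_le ht
  have hk := st11k_pos hl hl1
  have hp := st11p_pos
  have h1 : st11eta ℓ ℓ₁ t = (-(st11k ℓ ℓ₁ * st11p^2 * (1 + 2*Real.cos (st11β t))))^2 := by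
    unfold st11eta; ring
  rw [h1, Real.sqrt_sq (by nlinarith [mul_pos hk (pow_pos hp 2)])]

lemma st11_EL {ℓ ℓ₁ : ℝ} (hl : 0 < ℓ) (hl1 : 0 < ℓ₁) {t : ℝ} (ht : t ∈ Ioo (0:ℝ) 1) :
    st11q ℓ ℓ₁ t = (ℓ₁/ℓ) / (2 * Real.sqrt (st11eta ℓ ℓ₁ t)) := by
  rw [st11_sqrt_eta hl hl1 (Ioo_subset_Icc_self ht)]
  have h := st11_cos_lt ht
  have hk := st11k_pos hl hl1
  have hp := st11p_pos
  have hk3 := st11k_cube hl hl1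
  have hne : (1 + 2*Real.cos (st11β t)) ≠ 0 := h.ne
  unfold st11q st11eta''
  field_simp
  linear_combination (-2)*hk3

-- Basic consequences of admissibility
lemma adm_cont {ζ ζ' : ℝ → ℝ} (h : AdmissibleH ζ ζ') : ContinuousOn ζ (Icc 0 1) := by
  apply ContinuousOn.congr (intervalIntegral.continuousOn_primitive h.1)
  intro t ht
  rw [h.2.2.1 t ht, intervalIntegral.integral_of_le ht.1]

lemma adm_primitive_eq {ζ ζ' : ℝ → ℝ} (h : AdmissibleH ζ ζ') {t : ℝ} (ht : t ∈ Icc (0:ℝ) 1) :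
    ∫ u in Ioc (0:ℝ) t, ζ' u = ζ t := by
  rw [h.2.2.1 t ht, intervalIntegral.integral_of_le ht.1]
-- chunk 4 draft, appended to c2 for testing
lemma st11_fubini {ℓ ℓ₁ : ℝ} (hl : 0 < ℓ) (hl1 : 0 < ℓ₁) {ζ ζ' : ℝ → ℝ}
    (hζ : AdmissibleH ζ ζ') :
    ∫ t in Ioo (0:ℝ) 1, st11q ℓ ℓ₁ t * (ζ t - st11eta ℓ ℓ₁ t)
      = (1/(4*ℓ^2)) * ∫ t in Ioo (0:ℝ) 1, st11eta' ℓ ℓ₁ t * (ζ' t - st11eta' ℓ ℓ₁ t) := by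
  set g : ℝ → ℝ := fun t => ζ' t - st11eta' ℓ ℓ₁ t with hgdef
  have hgint : IntegrableOn g (Icc (0:ℝ) 1) :=
    hζ.1.sub ((st11eta'_cont ℓ ℓ₁).integrableOn_Icc)
  have hgIoo : IntegrableOn g (Ioo (0:ℝ) 1) := hgint.mono_set Ioo_subset_Icc_self
  have hGeq : ∀ t ∈ Icc (0:ℝ) 1, (∫ u in Ioc (0:ℝ) t, g u) = ζ t - st11eta ℓ ℓ₁ t := by
    intro t ht
    have h1 : IntegrableOn ζ' (Ioc 0 t) := hζ.1.mono_set (Ioc_subset_Icc_self.trans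
      (Icc_subset_Icc le_rfl ht.2))
    have h2 : IntegrableOn (st11eta' ℓ ℓ₁) (Ioc 0 t) :=
      ((st11eta'_cont ℓ ℓ₁).integrableOn_Icc).mono_set (Ioc_subset_Icc_self.trans
      (Icc_subset_Icc le_rfl ht.2))
    rw [show g = fun u => ζ' u - st11eta' ℓ ℓ₁ u from rfl, integral_sub h1 h2,
      adm_primitive_eq hζ ht]
    congr 1
    rw [st11_ftc_eta hl hl1 ht, intervalIntegral.integral_of_le ht.1]
  -- integral of g over (0,1) is zero
  have hgzero : ∫ u in Ioo (0:ℝ) 1, g u = 0 := by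
    rw [← integral_Ioc_eq_integral_Ioo, hGeq 1 (by norm_num), hζ.2.2.2.2.2,
      st11eta_one, sub_zero]
  have hqIoo : IntegrableOn (st11q ℓ ℓ₁) (Ioo (0:ℝ) 1) :=
    (st11q_integrableOn hl hl1).mono_set Ioo_subset_Ioc_self
  have hS : MeasurableSet {p : ℝ × ℝ | 0 < p.2 ∧ p.2 ≤ p.1} :=
    (measurableSet_lt measurable_const measurable_snd).inter
      (measurableSet_le measurable_snd measurable_fst)
  have hFrw : ∀ z : ℝ × ℝ, st11q ℓ ℓ₁ z.1 * (Ioc 0 z.1).indicator g z.2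
      = ({p : ℝ × ℝ | 0 < p.2 ∧ p.2 ≤ p.1}.indicator (fun _ => (1:ℝ)) z)
        * (st11q ℓ ℓ₁ z.1 * g z.2) := by
    intro z
    by_cases hz : z.2 ∈ Ioc 0 z.1
    · rw [indicator_of_mem hz, indicator_of_mem (by exact hz : z ∈ {p : ℝ × ℝ | 0 < p.2 ∧ p.2 ≤ p.1})]
      ring
    · rw [indicator_of_notMem hz, indicator_of_notMem (by exact hz)]
      ring
  have hprod : Integrable (fun z : ℝ × ℝ => st11q ℓ ℓ₁ z.1 * g z.2)
      ((volume.restrict (Ioo (0:ℝ) 1)).prod (volume.restrict (Ioo (0:ℝ) 1))) :=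
    Integrable.mul_prod hqIoo hgIoo
  have hFint : Integrable (fun z : ℝ × ℝ => st11q ℓ ℓ₁ z.1 * (Ioc 0 z.1).indicator g z.2)
      ((volume.restrict (Ioo (0:ℝ) 1)).prod (volume.restrict (Ioo (0:ℝ) 1))) := by
    rw [show (fun z : ℝ × ℝ => st11q ℓ ℓ₁ z.1 * (Ioc 0 z.1).indicator g z.2)
        = fun z : ℝ × ℝ => ({p : ℝ × ℝ | 0 < p.2 ∧ p.2 ≤ p.1}.indicator (fun _ => (1:ℝ)) z)
          * (st11q ℓ ℓ₁ z.1 * g z.2) from funext hFrw]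
    apply hprod.bdd_mul (c := 1) ((measurable_const.indicator hS).aestronglyMeasurable)
    refine ae_of_all _ (fun z => ?_)
    rw [Real.norm_eq_abs]
    by_cases hz : z ∈ {p : ℝ × ℝ | 0 < p.2 ∧ p.2 ≤ p.1}
    · rw [indicator_of_mem hz]; norm_num
    · rw [indicator_of_notMem hz]; norm_num
  have hswap := MeasureTheory.integral_integral_swap
    (f := fun t s => st11q ℓ ℓ₁ t * (Ioc 0 t).indicator g s) hFint
  have hL : (∫ t in Ioo (0:ℝ) 1, ∫ s in Ioo (0:ℝ) 1, st11q ℓ ℓ₁ t * (Ioc 0 t).indicator g s)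
      = ∫ t in Ioo (0:ℝ) 1, st11q ℓ ℓ₁ t * (ζ t - st11eta ℓ ℓ₁ t) := by
    apply setIntegral_congr_fun measurableSet_Ioo
    intro t ht
    dsimp only
    rw [integral_const_mul, integral_indicator measurableSet_Ioc,
      Measure.restrict_restrict measurableSet_Ioc,
      show Ioc 0 t ∩ Ioo 0 1 = Ioc (0:ℝ) t from inter_eq_left.2
        (fun x hx => ⟨hx.1, lt_of_le_of_lt hx.2 ht.2⟩),
      hGeq t (Ioo_subset_Icc_self ht)]
  have hR : (∫ s in Ioo (0:ℝ) 1, ∫ t in Ioo (0:ℝ) 1, st11q ℓ ℓ₁ t * (Ioc 0 t).indicator g s)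
      = ∫ s in Ioo (0:ℝ) 1, g s * ((1/(4*ℓ^2)) * st11eta' ℓ ℓ₁ s
          - (1/(4*ℓ^2)) * st11eta' ℓ ℓ₁ 1) := by
    apply setIntegral_congr_fun measurableSet_Ioo
    intro s hs
    dsimp only
    have hrw2 : (fun t => st11q ℓ ℓ₁ t * (Ioc 0 t).indicator g s)
        = fun t => (Ici s).indicator (fun u => st11q ℓ ℓ₁ u * g s) t := by
      funext t
      simp only [Set.indicator_apply, mem_Ioc, mem_Ici]
      by_cases hts : s ≤ t
      · simp [hts, hs.1]
      · simp [hts]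
    rw [hrw2, integral_indicator measurableSet_Ici,
      Measure.restrict_restrict measurableSet_Ici,
      show Ici s ∩ Ioo 0 1 = Ico s 1 from by
        ext x
        simp only [mem_inter_iff, mem_Ici, mem_Ioo, mem_Ico]
        constructor
        · rintro ⟨h1, _, h3⟩; exact ⟨h1, h3⟩
        · rintro ⟨h1, h2⟩; exact ⟨h1, lt_of_lt_of_le hs.1 h1, h2⟩,
      integral_mul_const, integral_Ico_eq_integral_Ioo, ← integral_Ioc_eq_integral_Ioo,
      ← intervalIntegral.integral_of_le hs.2.le, st11_ftc_q hl hl1 ⟨hs.1.le, hs.2.le⟩]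
    ring
  have hgη'int : IntegrableOn (fun t => st11eta' ℓ ℓ₁ t * g t) (Ioo (0:ℝ) 1) := by
    apply Integrable.bdd_mul (c := 4 * (st11k ℓ ℓ₁)^2 * st11p) hgIoo
      ((st11eta'_cont ℓ ℓ₁).aestronglyMeasurable)
    exact ae_of_all _ (fun t => by rw [Real.norm_eq_abs]; exact st11eta'_bound ℓ ℓ₁ t)
  calc ∫ t in Ioo (0:ℝ) 1, st11q ℓ ℓ₁ t * (ζ t - st11eta ℓ ℓ₁ t)
      = ∫ s in Ioo (0:ℝ) 1, g s * ((1/(4*ℓ^2)) * st11eta' ℓ ℓ₁ s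
          - (1/(4*ℓ^2)) * st11eta' ℓ ℓ₁ 1) := by rw [← hL, ← hR]; exact hswap
    _ = ∫ s in Ioo (0:ℝ) 1, ((1/(4*ℓ^2)) * (st11eta' ℓ ℓ₁ s * g s)
          - ((1/(4*ℓ^2)) * st11eta' ℓ ℓ₁ 1) * g s) := by
        apply setIntegral_congr_fun measurableSet_Ioo
        intro s _
        ring
    _ = (1/(4*ℓ^2)) * ∫ t in Ioo (0:ℝ) 1, st11eta' ℓ ℓ₁ t * (ζ' t - st11eta' ℓ ℓ₁ t) := by
        rw [integral_sub (hgη'int.const_mul _) (hgIoo.const_mul _),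
          integral_const_mul, integral_const_mul, hgzero, mul_zero, sub_zero]


lemma sqrt_concave_ineq {x y : ℝ} (hx : 0 < x) (hy : 0 ≤ y) :
    Real.sqrt y ≤ Real.sqrt x + (y - x)/(2*Real.sqrt x) := by
  have hsx : 0 < Real.sqrt x := Real.sqrt_pos.2 hx
  have key : 2*Real.sqrt x*Real.sqrt y ≤ x + y := by
    nlinarith [sq_nonneg (Real.sqrt x - Real.sqrt y), Real.sq_sqrt hx.le, Real.sq_sqrt hy]
  rw [← sub_nonneg]
  have expand : Real.sqrt x + (y - x)/(2*Real.sqrt x) - Real.sqrt y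
      = (x + y - 2*Real.sqrt x*Real.sqrt y)/(2*Real.sqrt x) := by
    field_simp
    linear_combination 2*(Real.sq_sqrt hx.le)
  rw [expand]
  exact div_nonneg (by linarith) (by positivity)

lemma st11_R_nonneg {ℓ ℓ₁ : ℝ} (hl : 0 < ℓ) (hl1 : 0 < ℓ₁) {ζ : ℝ → ℝ} {t : ℝ}
    (ht : t ∈ Ioo (0:ℝ) 1) (hζt : 0 ≤ ζ t) :
    0 ≤ -(ℓ₁/ℓ) * Real.sqrt (ζ t) + (ℓ₁/ℓ) * Real.sqrt (st11eta ℓ ℓ₁ t)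
        + st11q ℓ ℓ₁ t * (ζ t - st11eta ℓ ℓ₁ t) := by
  have ha : 0 < ℓ₁/ℓ := by positivity
  have hpos := st11eta_pos hl hl1 ht
  have hineq := sqrt_concave_ineq hpos hζt
  rw [st11_EL hl hl1 ht]
  have h2 : (ℓ₁/ℓ) / (2*Real.sqrt (st11eta ℓ ℓ₁ t)) * (ζ t - st11eta ℓ ℓ₁ t)
      = (ℓ₁/ℓ) * ((ζ t - st11eta ℓ ℓ₁ t)/(2*Real.sqrt (st11eta ℓ ℓ₁ t))) := by
    ring
  rw [h2]
  nlinarith [mul_le_mul_of_nonneg_left hineq ha.le]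

lemma st11_decomp {ℓ ℓ₁ : ℝ} (hl : 0 < ℓ) (hl1 : 0 < ℓ₁) {ζ ζ' : ℝ → ℝ}
    (hζ : AdmissibleH ζ ζ') :
    Hfun ℓ ℓ₁ ζ ζ' = Hfun ℓ ℓ₁ (st11eta ℓ ℓ₁) (st11eta' ℓ ℓ₁)
      + (∫ t in Ioo (0:ℝ) 1, (-(ℓ₁/ℓ) * Real.sqrt (ζ t) + (ℓ₁/ℓ) * Real.sqrt (st11eta ℓ ℓ₁ t)
          + st11q ℓ ℓ₁ t * (ζ t - st11eta ℓ ℓ₁ t)))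
      + (∫ t in Ioo (0:ℝ) 1, (ζ' t - st11eta' ℓ ℓ₁ t)^2) / (8*ℓ^2) := by
  have hIcc : Ioo (0:ℝ) 1 ⊆ Icc (0:ℝ) 1 := Ioo_subset_Icc_self
  -- integrabilities
  have Isζ : IntegrableOn (fun t => Real.sqrt (ζ t)) (Ioo (0:ℝ) 1) :=
    ((Real.continuous_sqrt.comp_continuousOn (adm_cont hζ)).integrableOn_Icc).mono_set hIcc
  have Isη : IntegrableOn (fun t => Real.sqrt (st11eta ℓ ℓ₁ t)) (Ioo (0:ℝ) 1) :=
    ((Real.continuous_sqrt.comp (st11eta_cont ℓ ℓ₁)).integrableOn_Icc).mono_set hIcc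
  have hqIoo : IntegrableOn (st11q ℓ ℓ₁) (Ioo (0:ℝ) 1) :=
    (st11q_integrableOn hl hl1).mono_set Ioo_subset_Ioc_self
  obtain ⟨C, hC⟩ := isCompact_Icc.exists_bound_of_continuousOn
    ((adm_cont hζ).sub (st11eta_cont ℓ ℓ₁).continuousOn)
  have IqG : IntegrableOn (fun t => st11q ℓ ℓ₁ t * (ζ t - st11eta ℓ ℓ₁ t)) (Ioo (0:ℝ) 1) := by
    have h1 : IntegrableOn (fun t => (ζ t - st11eta ℓ ℓ₁ t) * st11q ℓ ℓ₁ t) (Ioo (0:ℝ) 1) := by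
      apply Integrable.bdd_mul (c := C) hqIoo
        ((((adm_cont hζ).sub (st11eta_cont ℓ ℓ₁).continuousOn).mono hIcc).aestronglyMeasurable
          measurableSet_Ioo)
      exact (ae_restrict_iff' measurableSet_Ioo).2 (ae_of_all _ (fun t ht => hC t (hIcc ht)))
    have h2 : (fun t => st11q ℓ ℓ₁ t * (ζ t - st11eta ℓ ℓ₁ t))
        = fun t => (ζ t - st11eta ℓ ℓ₁ t) * st11q ℓ ℓ₁ t := by
      funext t; ring
    rw [h2]
    exact h1
  have Iζ'2 : IntegrableOn (fun t => (ζ' t)^2) (Ioo (0:ℝ) 1) := hζ.2.1.mono_set hIcc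
  have Iη'2 : IntegrableOn (fun t => (st11eta' ℓ ℓ₁ t)^2) (Ioo (0:ℝ) 1) :=
    (((st11eta'_cont ℓ ℓ₁).pow 2).integrableOn_Icc).mono_set hIcc
  have Iζ'Ioo : IntegrableOn ζ' (Ioo (0:ℝ) 1) := hζ.1.mono_set hIcc
  have Iη'ζ' : IntegrableOn (fun t => st11eta' ℓ ℓ₁ t * ζ' t) (Ioo (0:ℝ) 1) := by
    apply Integrable.bdd_mul (c := 4 * (st11k ℓ ℓ₁)^2 * st11p) Iζ'Ioo
      ((st11eta'_cont ℓ ℓ₁).aestronglyMeasurable)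
    exact ae_of_all _ (fun t => by rw [Real.norm_eq_abs]; exact st11eta'_bound ℓ ℓ₁ t)
  have Iη'g : IntegrableOn (fun t => st11eta' ℓ ℓ₁ t * (ζ' t - st11eta' ℓ ℓ₁ t)) (Ioo (0:ℝ) 1) := by
    have : (fun t => st11eta' ℓ ℓ₁ t * (ζ' t - st11eta' ℓ ℓ₁ t))
        = fun t => st11eta' ℓ ℓ₁ t * ζ' t - (st11eta' ℓ ℓ₁ t)^2 := by
      funext t; ring
    rw [this]
    exact Iη'ζ'.sub Iη'2
  have Ig2 : IntegrableOn (fun t => (ζ' t - st11eta' ℓ ℓ₁ t)^2) (Ioo (0:ℝ) 1) := by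
    have : (fun t => (ζ' t - st11eta' ℓ ℓ₁ t)^2)
        = fun t => (ζ' t)^2 - 2*(st11eta' ℓ ℓ₁ t * ζ' t) + (st11eta' ℓ ℓ₁ t)^2 := by
      funext t; ring
    rw [this]
    exact (Iζ'2.sub (Iη'ζ'.const_mul 2)).add Iη'2
  -- convert Hfun's to Ioo integrals
  have hHζ : Hfun ℓ ℓ₁ ζ ζ' = ∫ t in Ioo (0:ℝ) 1,
      (-(ℓ₁ / ℓ) * Real.sqrt (ζ t) + (ζ' t) ^ 2 / (8 * ℓ ^ 2)) := by
    rw [Hfun, intervalIntegral.integral_of_le zero_le_one, integral_Ioc_eq_integral_Ioo]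
  have hHη : Hfun ℓ ℓ₁ (st11eta ℓ ℓ₁) (st11eta' ℓ ℓ₁) = ∫ t in Ioo (0:ℝ) 1,
      (-(ℓ₁ / ℓ) * Real.sqrt (st11eta ℓ ℓ₁ t) + (st11eta' ℓ ℓ₁ t) ^ 2 / (8 * ℓ ^ 2)) := by
    rw [Hfun, intervalIntegral.integral_of_le zero_le_one, integral_Ioc_eq_integral_Ioo]
  -- split everything
  have J1 : IntegrableOn (fun t => -(ℓ₁/ℓ) * Real.sqrt (ζ t)) (Ioo (0:ℝ) 1) :=
    Isζ.const_mul _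
  have J2 : IntegrableOn (fun t => (ζ' t)^2 / (8*ℓ^2)) (Ioo (0:ℝ) 1) :=
    Iζ'2.div_const _
  have J3 : IntegrableOn (fun t => -(ℓ₁/ℓ) * Real.sqrt (st11eta ℓ ℓ₁ t)) (Ioo (0:ℝ) 1) :=
    Isη.const_mul _
  have J4 : IntegrableOn (fun t => (st11eta' ℓ ℓ₁ t)^2 / (8*ℓ^2)) (Ioo (0:ℝ) 1) :=
    Iη'2.div_const _
  have J5 : IntegrableOn (fun t => (ℓ₁/ℓ) * Real.sqrt (st11eta ℓ ℓ₁ t)) (Ioo (0:ℝ) 1) :=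
    Isη.const_mul _
  have J6 : IntegrableOn (fun t => -(ℓ₁/ℓ) * Real.sqrt (ζ t)
      + (ℓ₁/ℓ) * Real.sqrt (st11eta ℓ ℓ₁ t)) (Ioo (0:ℝ) 1) := J1.add J5
  rw [hHζ, hHη, integral_add J1 J2, integral_add J3 J4,
    integral_add J6 IqG, integral_add J1 J5,
    integral_const_mul, integral_const_mul, integral_const_mul, integral_div, integral_div]
  have hX6 : (∫ t in Ioo (0:ℝ) 1, (ζ' t)^2)
      = (∫ t in Ioo (0:ℝ) 1, (st11eta' ℓ ℓ₁ t)^2)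
        + 2 * (∫ t in Ioo (0:ℝ) 1, st11eta' ℓ ℓ₁ t * (ζ' t - st11eta' ℓ ℓ₁ t))
        + ∫ t in Ioo (0:ℝ) 1, (ζ' t - st11eta' ℓ ℓ₁ t)^2 := by
    have K1 : IntegrableOn (fun t => (st11eta' ℓ ℓ₁ t)^2
        + 2*(st11eta' ℓ ℓ₁ t * (ζ' t - st11eta' ℓ ℓ₁ t))) (Ioo (0:ℝ) 1) :=
      Iη'2.add (Iη'g.const_mul 2)
    have hcongr : (∫ t in Ioo (0:ℝ) 1, (ζ' t)^2)
        = ∫ t in Ioo (0:ℝ) 1, ((st11eta' ℓ ℓ₁ t)^2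
            + 2*(st11eta' ℓ ℓ₁ t * (ζ' t - st11eta' ℓ ℓ₁ t))
            + (ζ' t - st11eta' ℓ ℓ₁ t)^2) := by
      apply setIntegral_congr_fun measurableSet_Ioo
      intro t _
      ring
    rw [hcongr, integral_add K1 Ig2, integral_add Iη'2 (Iη'g.const_mul 2), integral_const_mul]
  have hX3 := st11_fubini hl hl1 hζ
  rw [hX6, hX3]
  ring

lemma st11_midint_nonneg {ℓ ℓ₁ : ℝ} (hl : 0 < ℓ) (hl1 : 0 < ℓ₁) {ζ ζ' : ℝ → ℝ}
    (hζ : AdmissibleH ζ ζ') :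
    0 ≤ ∫ t in Ioo (0:ℝ) 1, (-(ℓ₁/ℓ) * Real.sqrt (ζ t) + (ℓ₁/ℓ) * Real.sqrt (st11eta ℓ ℓ₁ t)
          + st11q ℓ ℓ₁ t * (ζ t - st11eta ℓ ℓ₁ t)) := by
  apply setIntegral_nonneg measurableSet_Ioo
  intro t ht
  exact st11_R_nonneg hl hl1 ht (hζ.2.2.2.1 t (Ioo_subset_Icc_self ht))

lemma st11_le {ℓ ℓ₁ : ℝ} (hl : 0 < ℓ) (hl1 : 0 < ℓ₁) {ζ ζ' : ℝ → ℝ}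
    (hζ : AdmissibleH ζ ζ') :
    Hfun ℓ ℓ₁ (st11eta ℓ ℓ₁) (st11eta' ℓ ℓ₁) ≤ Hfun ℓ ℓ₁ ζ ζ' := by
  rw [st11_decomp hl hl1 hζ]
  have h1 := st11_midint_nonneg hl hl1 hζ
  have h2 : 0 ≤ ∫ t in Ioo (0:ℝ) 1, (ζ' t - st11eta' ℓ ℓ₁ t)^2 :=
    setIntegral_nonneg measurableSet_Ioo (fun t _ => sq_nonneg _)
  have h3 : (0:ℝ) < 8*ℓ^2 := by positivity
  have h4 : 0 ≤ (∫ t in Ioo (0:ℝ) 1, (ζ' t - st11eta' ℓ ℓ₁ t)^2) / (8*ℓ^2) :=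
    div_nonneg h2 h3.le
  linarith

lemma st11_eq_case {ℓ ℓ₁ : ℝ} (hl : 0 < ℓ) (hl1 : 0 < ℓ₁) {ζ ζ' : ℝ → ℝ}
    (hζ : AdmissibleH ζ ζ')
    (heq : Hfun ℓ ℓ₁ ζ ζ' = Hfun ℓ ℓ₁ (st11eta ℓ ℓ₁) (st11eta' ℓ ℓ₁)) :
    ∀ t ∈ Icc (0:ℝ) 1, ζ t = st11eta ℓ ℓ₁ t := by
  have hdec := st11_decomp hl hl1 hζ
  rw [heq] at hdec
  have h1 := st11_midint_nonneg hl hl1 hζ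
  have h2 : 0 ≤ ∫ t in Ioo (0:ℝ) 1, (ζ' t - st11eta' ℓ ℓ₁ t)^2 :=
    setIntegral_nonneg measurableSet_Ioo (fun t _ => sq_nonneg _)
  have h3 : (0:ℝ) < 8*ℓ^2 := by positivity
  -- conclude the g² integral is zero
  have hzero : ∫ t in Ioo (0:ℝ) 1, (ζ' t - st11eta' ℓ ℓ₁ t)^2 = 0 := by
    rcases lt_or_eq_of_le h2 with h | h
    · exfalso
      have := div_pos h h3
      linarith
    · exact h.symm
  -- integrability of g²
  have hIcc : Ioo (0:ℝ) 1 ⊆ Icc (0:ℝ) 1 := Ioo_subset_Icc_self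
  have Iζ'Ioo : IntegrableOn ζ' (Ioo (0:ℝ) 1) := hζ.1.mono_set hIcc
  have Iη'ζ' : IntegrableOn (fun t => st11eta' ℓ ℓ₁ t * ζ' t) (Ioo (0:ℝ) 1) := by
    apply Integrable.bdd_mul (c := 4 * (st11k ℓ ℓ₁)^2 * st11p) Iζ'Ioo
      ((st11eta'_cont ℓ ℓ₁).aestronglyMeasurable)
    exact ae_of_all _ (fun t => by rw [Real.norm_eq_abs]; exact st11eta'_bound ℓ ℓ₁ t)
  have Ig2 : IntegrableOn (fun t => (ζ' t - st11eta' ℓ ℓ₁ t)^2) (Ioo (0:ℝ) 1) := by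
    have h : (fun t => (ζ' t - st11eta' ℓ ℓ₁ t)^2)
        = fun t => (ζ' t)^2 - 2*(st11eta' ℓ ℓ₁ t * ζ' t) + (st11eta' ℓ ℓ₁ t)^2 := by
      funext t; ring
    rw [h]
    exact ((hζ.2.1.mono_set hIcc).sub (Iη'ζ'.const_mul 2)).add
      (((st11eta'_cont ℓ ℓ₁).pow 2).integrableOn_Icc.mono_set hIcc)
  have hae : (fun t => (ζ' t - st11eta' ℓ ℓ₁ t)^2)
      =ᵐ[volume.restrict (Ioo (0:ℝ) 1)] 0 :=
    (integral_eq_zero_iff_of_nonneg (fun t => sq_nonneg _) Ig2).1 hzero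
  have hgae : (fun t => ζ' t - st11eta' ℓ ℓ₁ t) =ᵐ[volume.restrict (Ioo (0:ℝ) 1)] 0 := by
    filter_upwards [hae] with t h
    have : (ζ' t - st11eta' ℓ ℓ₁ t)^2 = 0 := h
    have := pow_eq_zero_iff (n := 2) (by norm_num) |>.1 this
    simpa using this
  intro t ht
  have hsub : Ioo (0:ℝ) t ⊆ Ioo (0:ℝ) 1 := Ioo_subset_Ioo le_rfl ht.2
  have hgae2 : (fun u => ζ' u - st11eta' ℓ ℓ₁ u) =ᵐ[volume.restrict (Ioo (0:ℝ) t)] 0 :=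
    ae_mono (Measure.restrict_mono hsub le_rfl) hgae
  have hint : ∫ u in Ioc (0:ℝ) t, (ζ' u - st11eta' ℓ ℓ₁ u) = 0 := by
    rw [integral_Ioc_eq_integral_Ioo]
    exact integral_eq_zero_of_ae hgae2
  have h1t : IntegrableOn ζ' (Ioc 0 t) := hζ.1.mono_set
    (Ioc_subset_Icc_self.trans (Icc_subset_Icc le_rfl ht.2))
  have h2t : IntegrableOn (st11eta' ℓ ℓ₁) (Ioc 0 t) :=
    ((st11eta'_cont ℓ ℓ₁).integrableOn_Icc).mono_set
      (Ioc_subset_Icc_self.trans (Icc_subset_Icc le_rfl ht.2))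
  rw [integral_sub h1t h2t, adm_primitive_eq hζ ht] at hint
  have : ∫ u in Ioc (0:ℝ) t, st11eta' ℓ ℓ₁ u = st11eta ℓ ℓ₁ t := by
    rw [st11_ftc_eta hl hl1 ht, intervalIntegral.integral_of_le ht.1]
  rw [this] at hint
  linarith

lemma st11_adm {ℓ ℓ₁ : ℝ} (hl : 0 < ℓ) (hl1 : 0 < ℓ₁) :
    AdmissibleH (st11eta ℓ ℓ₁) (st11eta' ℓ ℓ₁) :=
  ⟨(st11eta'_cont ℓ ℓ₁).integrableOn_Icc,
   ((st11eta'_cont ℓ ℓ₁).pow 2).integrableOn_Icc,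
   fun t ht => st11_ftc_eta hl hl1 ht,
   fun t _ => st11eta_nonneg ℓ ℓ₁ t,
   st11eta_zero ℓ ℓ₁, st11eta_one ℓ ℓ₁⟩

lemma st11_minH_eq {ℓ ℓ₁ : ℝ} (hl : 0 < ℓ) (hl1 : 0 < ℓ₁) :
    Hfun ℓ ℓ₁ (st11eta ℓ ℓ₁) (st11eta' ℓ ℓ₁) = minH ℓ ℓ₁ := by
  have hmem : Hfun ℓ ℓ₁ (st11eta ℓ ℓ₁) (st11eta' ℓ ℓ₁)
      ∈ {x | ∃ η η' : ℝ → ℝ, AdmissibleH η η' ∧ x = Hfun ℓ ℓ₁ η η'} :=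
    ⟨st11eta ℓ ℓ₁, st11eta' ℓ ℓ₁, st11_adm hl hl1, rfl⟩
  have hlb : ∀ x ∈ {x | ∃ η η' : ℝ → ℝ, AdmissibleH η η' ∧ x = Hfun ℓ ℓ₁ η η'},
      Hfun ℓ ℓ₁ (st11eta ℓ ℓ₁) (st11eta' ℓ ℓ₁) ≤ x := by
    rintro x ⟨ζ, ζ', hζ, rfl⟩
    exact st11_le hl hl1 hζ
  exact le_antisymm (le_csInf ⟨_, hmem⟩ hlb)
    (csInf_le ⟨_, hlb⟩ hmem)

lemma st11_minH_neg {ℓ ℓ₁ : ℝ} (hl : 0 < ℓ) (hl1 : 0 < ℓ₁) : minH ℓ ℓ₁ < 0 := by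
  obtain ⟨ε, hε0, hε1, hεl⟩ : ∃ ε : ℝ, 0 < ε ∧ ε < 1 ∧ ε < ℓ*ℓ₁ := by
    refine ⟨min 1 (ℓ*ℓ₁) / 2, ?_, ?_, ?_⟩
    · have : (0:ℝ) < min 1 (ℓ*ℓ₁) := lt_min one_pos (by positivity)
      linarith
    · have : min 1 (ℓ*ℓ₁) ≤ 1 := min_le_left _ _
      linarith
    · have h1 : min 1 (ℓ*ℓ₁) ≤ ℓ*ℓ₁ := min_le_right _ _
      have h2 : (0:ℝ) < ℓ*ℓ₁ := by positivity
      linarith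
  have hderiv : ∀ t : ℝ, HasDerivAt (fun u : ℝ => ε*(u - u^2)) (ε*(1 - 2*t)) t := by
    intro t
    have h := ((hasDerivAt_id t).sub (hasDerivAt_pow 2 t)).const_mul ε
    refine h.congr_deriv (Eq.symm ?_)
    norm_num
  have hζcont : Continuous (fun u : ℝ => ε*(u - u^2)) :=
    continuous_const.mul (continuous_id.sub (continuous_pow 2))
  have hζ'cont : Continuous (fun u : ℝ => ε*(1 - 2*u)) :=
    continuous_const.mul (continuous_const.sub (continuous_const.mul continuous_id))
  have hadm : AdmissibleH (fun u : ℝ => ε*(u - u^2)) (fun u : ℝ => ε*(1 - 2*u)) := by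
    refine ⟨hζ'cont.integrableOn_Icc, (hζ'cont.pow 2).integrableOn_Icc, ?_, ?_, by simp, by simp⟩
    · intro t _
      rw [intervalIntegral.integral_eq_sub_of_hasDerivAt (fun x _ => hderiv x)
        (hζ'cont.intervalIntegrable 0 t)]
      simp
    · intro t ht
      have h1 := ht.1
      have h2 := ht.2
      show (0:ℝ) ≤ ε*(t - t^2)
      have h3 : (0:ℝ) ≤ t*(1 - t) := mul_nonneg h1 (by linarith)
      nlinarith [mul_nonneg hε0.le h3]
  -- compute/bound the energy of the trial function
  have hHsplit : Hfun ℓ ℓ₁ (fun u : ℝ => ε*(u - u^2)) (fun u : ℝ => ε*(1 - 2*u))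
      = (∫ t in (0:ℝ)..1, -(ℓ₁/ℓ) * Real.sqrt (ε*(t - t^2)))
        + ∫ t in (0:ℝ)..1, (ε*(1 - 2*t))^2/(8*ℓ^2) := by
    have hc1 : Continuous (fun t : ℝ => -(ℓ₁/ℓ) * Real.sqrt (ε*(t - t^2))) :=
      continuous_const.mul (Real.continuous_sqrt.comp hζcont)
    have hc2 : Continuous (fun t : ℝ => (ε*(1 - 2*t))^2/(8*ℓ^2)) :=
      (hζ'cont.pow 2).div_const _
    rw [Hfun]
    rw [intervalIntegral.integral_add (hc1.intervalIntegrable 0 1) (hc2.intervalIntegrable 0 1)]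
  have hA : (∫ t in (0:ℝ)..1, -(ℓ₁/ℓ) * Real.sqrt (ε*(t - t^2)))
      = (-(ℓ₁/ℓ) * Real.sqrt ε) * ∫ t in (0:ℝ)..1, Real.sqrt (t - t^2) := by
    rw [← intervalIntegral.integral_const_mul]
    apply intervalIntegral.integral_congr
    intro t _
    simp only
    rw [Real.sqrt_mul hε0.le]
    ring
  have hsqcont : Continuous (fun t : ℝ => Real.sqrt (t - t^2)) :=
    Real.continuous_sqrt.comp (continuous_id.sub (continuous_pow 2))
  have hc : Real.sqrt (3/16) > 1/4 := by
    have h1 : Real.sqrt (1/16) = 1/4 := by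
      rw [show (1:ℝ)/16 = (1/4)^2 by norm_num, Real.sqrt_sq (by norm_num)]
    have h2 : Real.sqrt (1/16) < Real.sqrt (3/16) :=
      Real.sqrt_lt_sqrt (by norm_num) (by norm_num)
    linarith
  have hI : (1/2) * Real.sqrt (3/16) ≤ ∫ t in (0:ℝ)..1, Real.sqrt (t - t^2) := by
    have hmono : (∫ t in (1/4:ℝ)..(3/4), Real.sqrt (t - t^2))
        ≤ ∫ t in (0:ℝ)..1, Real.sqrt (t - t^2) := by
      apply intervalIntegral.integral_mono_interval (by norm_num) (by norm_num) (by norm_num)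
        (ae_of_all _ (fun t => Real.sqrt_nonneg _))
        (hsqcont.intervalIntegrable 0 1)
    have hconst : (∫ t in (1/4:ℝ)..(3/4), (Real.sqrt (3/16) : ℝ))
        ≤ ∫ t in (1/4:ℝ)..(3/4), Real.sqrt (t - t^2) := by
      apply intervalIntegral.integral_mono_on (by norm_num)
        (intervalIntegrable_const) (hsqcont.intervalIntegrable _ _)
      intro t ht
      apply Real.sqrt_le_sqrt
      nlinarith [ht.1, ht.2]
    rw [intervalIntegral.integral_const] at hconst
    have : ((3/4:ℝ) - 1/4) • Real.sqrt (3/16) = (1/2) * Real.sqrt (3/16) := by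
      norm_num
    rw [this] at hconst
    linarith
  have hB : (∫ t in (0:ℝ)..1, (ε*(1 - 2*t))^2/(8*ℓ^2)) ≤ ε^2/(8*ℓ^2) := by
    have h1 : (∫ t in (0:ℝ)..1, (ε*(1 - 2*t))^2/(8*ℓ^2))
        ≤ ∫ t in (0:ℝ)..1, (ε^2/(8*ℓ^2) : ℝ) := by
      apply intervalIntegral.integral_mono_on zero_le_one
        (((hζ'cont.pow 2).div_const _).intervalIntegrable 0 1) intervalIntegrable_const
      intro t ht
      have h3 : (0:ℝ) < 8*ℓ^2 := by positivity
      have h4 : (ε*(1 - 2*t))^2 ≤ ε^2 := by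
        nlinarith [mul_nonneg (sq_nonneg ε) (mul_nonneg ht.1 (by linarith [ht.2] : (0:ℝ) ≤ 1 - t))]
      exact (div_le_div_iff_of_pos_right h3).2 h4
    rw [intervalIntegral.integral_const] at h1
    simpa using h1
  have hsε : ε < Real.sqrt ε := by
    have h1 : ε = Real.sqrt (ε^2) := (Real.sqrt_sq hε0.le).symm
    nth_rewrite 1 [h1]
    exact Real.sqrt_lt_sqrt (sq_nonneg _) (by nlinarith)
  have hsε0 : 0 < Real.sqrt ε := Real.sqrt_pos.2 hε0
  have hkey : ε*ε < (ℓ*ℓ₁) * Real.sqrt ε := by nlinarith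
  have haε : 0 < (ℓ₁/ℓ) * Real.sqrt ε := by positivity
  have hI8 : (1:ℝ)/8 ≤ ∫ t in (0:ℝ)..1, Real.sqrt (t - t^2) := by
    nlinarith
  have hA2 : (-(ℓ₁/ℓ) * Real.sqrt ε) * (∫ t in (0:ℝ)..1, Real.sqrt (t - t^2))
      ≤ -(((ℓ₁/ℓ) * Real.sqrt ε)/8) := by
    nlinarith [mul_le_mul_of_nonneg_left hI8 haε.le]
  have hfinal : ε^2/(8*ℓ^2) < ((ℓ₁/ℓ) * Real.sqrt ε)/8 := by
    rw [div_lt_div_iff₀ (by positivity) (by norm_num)]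
    have ha : (ℓ₁/ℓ)*ℓ = ℓ₁ := by field_simp
    nlinarith [hkey, hl, sq_nonneg ℓ]
  have hHneg : Hfun ℓ ℓ₁ (fun u : ℝ => ε*(u - u^2)) (fun u : ℝ => ε*(1 - 2*u)) < 0 := by
    rw [hHsplit, hA]
    linarith
  rw [← st11_minH_eq hl hl1]
  exact lt_of_le_of_lt (st11_le hl hl1 hadm) hHneg

end St11Aux

/-- `H` attains its minimum over `A_H`, the minimizer is unique, and the minimum
value is strictly negative. -/
theorem stmt_11 (ℓ ℓ₁ : ℝ) (hl : 0 < ℓ) (hl1 : 0 < ℓ₁) :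
    ∃ η η' : ℝ → ℝ, AdmissibleH η η' ∧ Hfun ℓ ℓ₁ η η' = minH ℓ ℓ₁ ∧
      minH ℓ ℓ₁ < 0 ∧
      ∀ ζ ζ' : ℝ → ℝ, AdmissibleH ζ ζ' → Hfun ℓ ℓ₁ ζ ζ' = minH ℓ ℓ₁ →
        ∀ t ∈ Icc (0:ℝ) 1, ζ t = η t := by
  refine ⟨st11eta ℓ ℓ₁, st11eta' ℓ ℓ₁, st11_adm hl hl1, st11_minH_eq hl hl1,
    st11_minH_neg hl hl1, ?_⟩
  intro ζ ζ' hζ hζeq t ht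
  exact st11_eq_case hl hl1 hζ (by rw [hζeq, ← st11_minH_eq hl hl1]) t ht
end

section
/- Strict monotonicity of g₀ below the fracture threshold: if 0 ≤ s' < s and g₀(s) < 1, then g₀(s') < g₀(s). -/
open MeasureTheory Set Filter

/-- Subadditivity of the square root. -/
lemma stmt17.sqrt_add_le_aux {x y : ℝ} (hx : 0 ≤ x) (hy : 0 ≤ y) :
    Real.sqrt (x + y) ≤ Real.sqrt x + Real.sqrt y := by
  have h : x + y ≤ (Real.sqrt x + Real.sqrt y) ^ 2 := by
    have hx' := Real.sq_sqrt hx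
    have hy' := Real.sq_sqrt hy
    nlinarith [Real.sqrt_nonneg x, Real.sqrt_nonneg y]
  calc Real.sqrt (x + y) ≤ Real.sqrt ((Real.sqrt x + Real.sqrt y) ^ 2) := Real.sqrt_le_sqrt h
    _ = Real.sqrt x + Real.sqrt y := by
        rw [Real.sqrt_sq_eq_abs]; exact abs_of_nonneg (by positivity)

/-- The key pointwise estimate comparing the integrands for `s'` and `s`. -/
lemma stmt17.pointwise_aux {s s' ℓ c a q : ℝ} (h0 : 0 ≤ s') (hss : s' < s) (hc : 0 < c)
    (hca : c ^ 2 ≤ a) (haℓ : a ≤ ℓ ^ 2) :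
    Real.sqrt (s' ^ 2 * a + q ^ 2 / 4)
      + (s ^ 2 - s' ^ 2) * c ^ 2 / (2 * Real.sqrt (s ^ 2 * ℓ ^ 2 + 4)) * (1 - |q| / 4)
      ≤ Real.sqrt (s ^ 2 * a + q ^ 2 / 4) := by
  set b := q ^ 2 / 4 with hbdef
  set D := (s ^ 2 - s' ^ 2) * c ^ 2 / (2 * Real.sqrt (s ^ 2 * ℓ ^ 2 + 4)) with hDdef
  have hs : 0 < s := h0.trans_lt hss
  have ha : 0 < a := lt_of_lt_of_le (by positivity) hca
  have hb0 : 0 ≤ b := by positivity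
  have hsq : s' ^ 2 < s ^ 2 := by nlinarith
  have hR : 0 < Real.sqrt (s ^ 2 * ℓ ^ 2 + 4) := Real.sqrt_pos.2 (by positivity)
  have hD : 0 < D := div_pos (mul_pos (by nlinarith) (by positivity)) (by positivity)
  have hmono : Real.sqrt (s' ^ 2 * a + b) ≤ Real.sqrt (s ^ 2 * a + b) :=
    Real.sqrt_le_sqrt (by nlinarith)
  by_cases hq : |q| ≤ 4
  · have hb4 : b ≤ 4 := by rw [hbdef]; nlinarith [sq_abs q, abs_nonneg q]
    have hx : Real.sqrt (s ^ 2 * a + b) ≤ Real.sqrt (s ^ 2 * ℓ ^ 2 + 4) :=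
      Real.sqrt_le_sqrt (by nlinarith [sq_nonneg s])
    have hxpos : 0 < Real.sqrt (s ^ 2 * a + b) :=
      Real.sqrt_pos.2 (by nlinarith [mul_pos (pow_pos hs 2) ha])
    have hsum : 0 < Real.sqrt (s ^ 2 * a + b) + Real.sqrt (s' ^ 2 * a + b) :=
      add_pos_of_pos_of_nonneg hxpos (Real.sqrt_nonneg _)
    have e1 : Real.sqrt (s ^ 2 * a + b) ^ 2 = s ^ 2 * a + b :=
      Real.sq_sqrt (by nlinarith [sq_nonneg s])
    have e2 : Real.sqrt (s' ^ 2 * a + b) ^ 2 = s' ^ 2 * a + b :=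
      Real.sq_sqrt (by nlinarith [sq_nonneg s'])
    have hdiff : (Real.sqrt (s ^ 2 * a + b) - Real.sqrt (s' ^ 2 * a + b))
        * (Real.sqrt (s ^ 2 * a + b) + Real.sqrt (s' ^ 2 * a + b)) = (s ^ 2 - s' ^ 2) * a := by
      linear_combination e1 - e2
    have hDR : D * (2 * Real.sqrt (s ^ 2 * ℓ ^ 2 + 4)) = (s ^ 2 - s' ^ 2) * c ^ 2 := by
      rw [hDdef]; field_simp
    have hDsum : D * (Real.sqrt (s ^ 2 * a + b) + Real.sqrt (s' ^ 2 * a + b))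
        ≤ (s ^ 2 - s' ^ 2) * a := by
      calc D * (Real.sqrt (s ^ 2 * a + b) + Real.sqrt (s' ^ 2 * a + b))
          ≤ D * (2 * Real.sqrt (s ^ 2 * ℓ ^ 2 + 4)) :=
            mul_le_mul_of_nonneg_left (by linarith) hD.le
        _ = (s ^ 2 - s' ^ 2) * c ^ 2 := hDR
        _ ≤ (s ^ 2 - s' ^ 2) * a := mul_le_mul_of_nonneg_left hca (by nlinarith)
    have hDle : D ≤ Real.sqrt (s ^ 2 * a + b) - Real.sqrt (s' ^ 2 * a + b) := by
      rw [← hdiff] at hDsum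
      exact le_of_mul_le_mul_right hDsum hsum
    have h1q : (1 : ℝ) - |q| / 4 ≤ 1 := by linarith [abs_nonneg q]
    have hfin : D * (1 - |q| / 4) ≤ D * 1 := mul_le_mul_of_nonneg_left h1q hD.le
    rw [mul_one] at hfin
    linarith
  · push_neg at hq
    have : D * (1 - |q| / 4) ≤ 0 :=
      mul_nonpos_of_nonneg_of_nonpos hD.le (by linarith)
    linarith

/-- strict monotonicity of `g₀` below the fracture threshold. -/
theorem stmt_17 (ℓ ℓ₁ : ℝ) (f₁ : ℝ → ℝ) (hf : F1Hyp ℓ ℓ₁ f₁)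
    (s' s : ℝ) (h0 : 0 ≤ s') (hss : s' < s) (hlt : g0 f₁ s < 1) :
    g0 f₁ s' < g0 f₁ s := by
  have hs : 0 < s := h0.trans_lt hss
  -- the admissible set of energies
  set S : ℝ → Set ℝ := fun r =>
    {x | ∃ γ γ' : ℝ → ℝ, Admissible γ γ' ∧ x = energy f₁ r γ γ'} with hSdef
  have hg0 : ∀ r : ℝ, g0 f₁ r = sInf (S r) := fun r => rfl
  have hne : ∀ r : ℝ, (S r).Nonempty := by
    intro r
    refine ⟨energy f₁ r (fun _ => 0) (fun _ => 0), fun _ => 0, fun _ => 0, ?_, rfl⟩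
    refine ⟨?_, ?_, ?_, rfl, rfl⟩
    · exact integrableOn_zero
    · intro t ht; simp
    · intro t ht; norm_num
  have hlb : ∀ r : ℝ, ∀ x ∈ S r, (0:ℝ) ≤ x := by
    rintro r x ⟨γ, γ', hadm, rfl⟩
    exact intervalIntegral.integral_nonneg (by norm_num) (fun u _ => Real.sqrt_nonneg _)
  have hbdd : ∀ r : ℝ, BddBelow (S r) := fun r => ⟨0, fun x hx => hlb r x hx⟩
  have hg0nn : 0 ≤ g0 f₁ s := by
    rw [hg0]; exact le_csInf (hne s) (hlb s)
  set B0 : ℝ := (1 + g0 f₁ s) / 2 with hB0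
  have hB0nn : 0 ≤ B0 := by rw [hB0]; linarith
  have hB0lt : B0 < 1 := by rw [hB0]; linarith
  have hB0le1 : B0 ≤ 1 := hB0lt.le
  have hsqB0 : Real.sqrt B0 < 1 := by
    have := Real.sqrt_lt_sqrt hB0nn hB0lt
    rwa [Real.sqrt_one] at this
  set c : ℝ := f₁ (Real.sqrt B0) with hcdef
  have hc : 0 < c := by
    have h := hf.anti ⟨Real.sqrt_nonneg _, hsqB0.le⟩ ⟨by norm_num, le_rfl⟩ hsqB0
    rw [hf.f11] at h
    exact h
  set D : ℝ := (s ^ 2 - s' ^ 2) * c ^ 2 / (2 * Real.sqrt (s ^ 2 * ℓ ^ 2 + 4)) with hDdef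
  have hD : 0 < D := by
    rw [hDdef]
    exact div_pos (mul_pos (by nlinarith) (by positivity)) (by positivity)
  have hfle : ∀ x ∈ Icc (0:ℝ) 1, 0 ≤ f₁ x ∧ f₁ x ≤ ℓ := by
    intro x hx
    refine ⟨hf.nonneg x hx, ?_⟩
    rcases eq_or_lt_of_le hx.1 with h | h
    · rw [← h, hf.f10]
    · have := hf.anti ⟨le_rfl, by norm_num⟩ hx h
      rw [hf.f10] at this
      exact this.le
  -- the key uniform gap estimate
  have key : ∀ γ γ' : ℝ → ℝ, Admissible γ γ' → energy f₁ s γ γ' ≤ B0 →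
      energy f₁ s' γ γ' + D / 2 ≤ energy f₁ s γ γ' := by
    intro γ γ' hadm hen
    obtain ⟨hInt, hFTC, hBound, h0γ, h1γ⟩ := hadm
    have hγc : ContinuousOn γ (Icc 0 1) := by
      have h := intervalIntegral.continuousOn_primitive_interval (μ := volume) (a := 0) (b := 1)
        (f := γ') (by simpa [uIcc_of_le (by norm_num : (0:ℝ) ≤ 1)] using hInt)
      rw [uIcc_of_le (by norm_num : (0:ℝ) ≤ 1)] at h
      exact h.congr fun t ht => hFTC t ht
    have hsqrtmem : ∀ t ∈ Icc (0:ℝ) 1, Real.sqrt (γ t) ∈ Icc (0:ℝ) 1 := fun t ht =>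
      ⟨Real.sqrt_nonneg _, Real.sqrt_le_one.2 (hBound t ht).2⟩
    have hAcont : ContinuousOn (fun t => f₁ (Real.sqrt (γ t))) (Icc 0 1) :=
      hf.cont.comp (Real.continuous_sqrt.comp_continuousOn hγc) hsqrtmem
    have hγ'm : AEStronglyMeasurable γ' (volume.restrict (Icc (0:ℝ) 1)) :=
      hInt.aestronglyMeasurable
    -- integrability of the energy integrand, for any coefficient r
    have hFint : ∀ r : ℝ, IntervalIntegrable
        (fun t => Real.sqrt (r ^ 2 * (f₁ (Real.sqrt (γ t))) ^ 2 + (γ' t) ^ 2 / 4))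
        volume 0 1 := by
      intro r
      have hmeas : AEStronglyMeasurable
          (fun t => Real.sqrt (r ^ 2 * (f₁ (Real.sqrt (γ t))) ^ 2 + (γ' t) ^ 2 / 4))
          (volume.restrict (Icc (0:ℝ) 1)) := by
        apply Real.continuous_sqrt.comp_aestronglyMeasurable
        apply AEStronglyMeasurable.add
        · exact ((hAcont.pow 2).const_smul (r ^ 2)).aestronglyMeasurable measurableSet_Icc
        · exact ((hγ'm.mul hγ'm).const_smul (4:ℝ)⁻¹).congr (ae_of_all _ fun t => by simp; ring)
      have hbd : IntegrableOn (fun t => |r| * ℓ + |γ' t| / 2) (Icc (0:ℝ) 1) volume := by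
        apply Integrable.add
        · exact integrableOn_const measure_Icc_lt_top.ne enorm_ne_top
        · exact hInt.abs.div_const 2
      have hio : IntegrableOn
          (fun t => Real.sqrt (r ^ 2 * (f₁ (Real.sqrt (γ t))) ^ 2 + (γ' t) ^ 2 / 4))
          (Icc (0:ℝ) 1) volume := by
        refine hbd.mono' hmeas ?_
        refine (ae_restrict_iff' measurableSet_Icc).2 (ae_of_all _ fun t ht => ?_)
        have h1 : Real.sqrt (r ^ 2 * (f₁ (Real.sqrt (γ t))) ^ 2) ≤ |r| * ℓ := by
          rw [show r ^ 2 * (f₁ (Real.sqrt (γ t))) ^ 2 = (r * f₁ (Real.sqrt (γ t))) ^ 2 by ring,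
            Real.sqrt_sq_eq_abs, abs_mul]
          have hm := hfle _ (hsqrtmem t ht)
          rw [abs_of_nonneg hm.1]
          exact mul_le_mul_of_nonneg_left hm.2 (abs_nonneg r)
        have h2 : Real.sqrt ((γ' t) ^ 2 / 4) = |γ' t| / 2 := by
          rw [show (γ' t) ^ 2 / 4 = (γ' t / 2) ^ 2 by ring, Real.sqrt_sq_eq_abs, abs_div]
          norm_num
        rw [Real.norm_eq_abs, abs_of_nonneg (Real.sqrt_nonneg _)]
        calc Real.sqrt (r ^ 2 * (f₁ (Real.sqrt (γ t))) ^ 2 + (γ' t) ^ 2 / 4)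
            ≤ Real.sqrt (r ^ 2 * (f₁ (Real.sqrt (γ t))) ^ 2) + Real.sqrt ((γ' t) ^ 2 / 4) :=
              stmt17.sqrt_add_le_aux (by positivity) (by positivity)
          _ ≤ |r| * ℓ + |γ' t| / 2 := by rw [h2]; exact add_le_add_left h1 _
      exact (intervalIntegrable_iff_integrableOn_Icc_of_le (by norm_num)).2 hio
    have hγ'ii : IntervalIntegrable γ' volume 0 1 :=
      (intervalIntegrable_iff_integrableOn_Icc_of_le (by norm_num)).2 hInt
    have habsii : IntervalIntegrable (fun u => |γ' u|) volume 0 1 := hγ'ii.abs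
    have hEs : energy f₁ s γ γ'
        = ∫ t in (0:ℝ)..1, Real.sqrt (s ^ 2 * (f₁ (Real.sqrt (γ t))) ^ 2 + (γ' t) ^ 2 / 4) := rfl
    -- total variation bound
    have hI1 : (∫ t in (0:ℝ)..1, |γ' t|) ≤ 2 * energy f₁ s γ γ' := by
      have hpt : ∀ t ∈ Icc (0:ℝ) 1, |γ' t|
          ≤ 2 * Real.sqrt (s ^ 2 * (f₁ (Real.sqrt (γ t))) ^ 2 + (γ' t) ^ 2 / 4) := by
        intro t _
        have h2 : Real.sqrt ((γ' t) ^ 2 / 4) = |γ' t| / 2 := by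
          rw [show (γ' t) ^ 2 / 4 = (γ' t / 2) ^ 2 by ring, Real.sqrt_sq_eq_abs, abs_div]
          norm_num
        have h3 : Real.sqrt ((γ' t) ^ 2 / 4)
            ≤ Real.sqrt (s ^ 2 * (f₁ (Real.sqrt (γ t))) ^ 2 + (γ' t) ^ 2 / 4) :=
          Real.sqrt_le_sqrt (le_add_of_nonneg_left (by positivity))
        rw [h2] at h3
        linarith
      have h := intervalIntegral.integral_mono_on (by norm_num : (0:ℝ) ≤ 1) habsii
        ((hFint s).const_mul 2) hpt
      rwa [intervalIntegral.integral_const_mul, ← hEs] at h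
    -- pointwise bound on γ
    have hγle : ∀ t ∈ Icc (0:ℝ) 1, γ t ≤ energy f₁ s γ γ' := by
      intro t ht
      have hss1 : uIcc (0:ℝ) t ⊆ uIcc (0:ℝ) 1 := by
        rw [uIcc_of_le ht.1, uIcc_of_le (by norm_num : (0:ℝ) ≤ 1)]
        exact Icc_subset_Icc le_rfl ht.2
      have hss2 : uIcc t 1 ⊆ uIcc (0:ℝ) 1 := by
        rw [uIcc_of_le ht.2, uIcc_of_le (by norm_num : (0:ℝ) ≤ 1)]
        exact Icc_subset_Icc ht.1 le_rfl
      have hsub1 : IntervalIntegrable γ' volume 0 t := hγ'ii.mono_set hss1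
      have hsub2 : IntervalIntegrable γ' volume t 1 := hγ'ii.mono_set hss2
      have hsub1a : IntervalIntegrable (fun u => |γ' u|) volume 0 t := habsii.mono_set hss1
      have hsub2a : IntervalIntegrable (fun u => |γ' u|) volume t 1 := habsii.mono_set hss2
      have hsplit := intervalIntegral.integral_add_adjacent_intervals hsub1 hsub2
      have hsplita := intervalIntegral.integral_add_adjacent_intervals hsub1a hsub2a
      have h01 : (∫ u in (0:ℝ)..1, γ' u) = 0 := by
        rw [← hFTC 1 (by norm_num)]; exact h1γ
      have hγt := hFTC t ht
      have e1 : γ t ≤ ∫ u in (0:ℝ)..t, |γ' u| := by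
        rw [hγt]
        exact le_trans (le_abs_self _) (intervalIntegral.abs_integral_le_integral_abs ht.1)
      have e2 : γ t ≤ ∫ u in t..1, |γ' u| := by
        have hneg : (∫ u in t..1, γ' u) = -γ t := by
          rw [hγt] at *; linarith [hsplit, h01]
        calc γ t = -(∫ u in t..1, γ' u) := by rw [hneg]; ring
          _ ≤ |∫ u in t..1, γ' u| := neg_le_abs _
          _ ≤ ∫ u in t..1, |γ' u| := intervalIntegral.abs_integral_le_integral_abs ht.2
      linarith [hsplita, hI1]
    -- lower bound on f₁ ∘ √γ
    have hclow : ∀ t ∈ Icc (0:ℝ) 1, c ≤ f₁ (Real.sqrt (γ t)) := by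
      intro t ht
      have h1 : γ t ≤ B0 := le_trans (hγle t ht) hen
      have h2 : Real.sqrt (γ t) ≤ Real.sqrt B0 := Real.sqrt_le_sqrt h1
      exact hf.anti.antitoneOn (hsqrtmem t ht) ⟨Real.sqrt_nonneg _, hsqB0.le⟩ h2
    -- pointwise comparison of the integrands
    have hpt : ∀ t ∈ Icc (0:ℝ) 1,
        Real.sqrt (s' ^ 2 * (f₁ (Real.sqrt (γ t))) ^ 2 + (γ' t) ^ 2 / 4)
          + (D - D / 4 * |γ' t|)
          ≤ Real.sqrt (s ^ 2 * (f₁ (Real.sqrt (γ t))) ^ 2 + (γ' t) ^ 2 / 4) := by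
      intro t ht
      have hmem := hfle _ (hsqrtmem t ht)
      have haux := stmt17.pointwise_aux (s := s) (s' := s') (ℓ := ℓ) (c := c)
        (a := (f₁ (Real.sqrt (γ t))) ^ 2) (q := γ' t) h0 hss hc
        (by nlinarith [hclow t ht, hc.le])
        (by nlinarith [hmem.1, hmem.2])
      rw [← hDdef] at haux
      have hre : D - D / 4 * |γ' t| = D * (1 - |γ' t| / 4) := by ring
      rw [hre]
      exact haux
    -- integrate
    have hLint : IntervalIntegrable
        (fun t => Real.sqrt (s' ^ 2 * (f₁ (Real.sqrt (γ t))) ^ 2 + (γ' t) ^ 2 / 4)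
          + (D - D / 4 * |γ' t|)) volume 0 1 :=
      (hFint s').add (intervalIntegrable_const.sub (habsii.const_mul (D / 4)))
    have hint := intervalIntegral.integral_mono_on (by norm_num : (0:ℝ) ≤ 1) hLint (hFint s) hpt
    have hsplitInt : (∫ t in (0:ℝ)..1,
        (Real.sqrt (s' ^ 2 * (f₁ (Real.sqrt (γ t))) ^ 2 + (γ' t) ^ 2 / 4)
          + (D - D / 4 * |γ' t|)))
        = energy f₁ s' γ γ' + (D - D / 4 * ∫ t in (0:ℝ)..1, |γ' t|) := by
      rw [intervalIntegral.integral_add (hFint s')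
          (intervalIntegrable_const.sub (habsii.const_mul (D / 4))),
        intervalIntegral.integral_sub intervalIntegrable_const (habsii.const_mul (D / 4)),
        intervalIntegral.integral_const_mul, intervalIntegral.integral_const]
      simp [energy]
    rw [hsplitInt, ← hEs] at hint
    have hEs1 : energy f₁ s γ γ' ≤ 1 := le_trans hen hB0le1
    have hI2 : (∫ t in (0:ℝ)..1, |γ' t|) ≤ 2 := by linarith
    have : D / 4 * (∫ t in (0:ℝ)..1, |γ' t|) ≤ D / 4 * 2 :=
      mul_le_mul_of_nonneg_left hI2 (by linarith)
    linarith
  -- conclusion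
  set ε : ℝ := min ((1 - g0 f₁ s) / 2) (D / 2) with hε
  have hεpos : 0 < ε := lt_min (by linarith) (by linarith)
  obtain ⟨x, hxS, hxlt⟩ : ∃ x ∈ S s, x < g0 f₁ s + ε := by
    apply exists_lt_of_csInf_lt (hne s)
    rw [← hg0]
    linarith
  obtain ⟨γ, γ', hadm, rfl⟩ := hxS
  have henB : energy f₁ s γ γ' ≤ B0 := by
    have h1 : ε ≤ (1 - g0 f₁ s) / 2 := min_le_left _ _
    rw [hB0]
    linarith
  have hkey := key γ γ' hadm henB
  have hmem' : energy f₁ s' γ γ' ∈ S s' := ⟨γ, γ', hadm, rfl⟩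
  have hle : g0 f₁ s' ≤ energy f₁ s' γ γ' := by
    rw [hg0]
    exact csInf_le (hbdd s') hmem'
  have hεD : ε ≤ D / 2 := min_le_right _ _
  linarith
end
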